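/- arXiv:2009.02729 — 5 statements merged into one kernel-verified Lean document; each statement's English description precedes it below -/
import Mathlib

section
/- Let R be a Noetherian commutative ring such that every finitely generated stably free R-module is free, and let L be a free R-module of rank 2n equipped with a perfect alternating R-bilinear pairing ψ: L × L → R. Then L admits a Lagrangian (symplectic) basis, i.e., a basis {x_1,…,x_n, y_1,…,y_n} with ψ(x_i, y_j) = δ_{ij} and ψ(x_i, x_j) = ψ(y_i, y_j) = 0 for all i, j. -/
theorem aux_symp
    (R : Type) [CommRing R] [IsNoetherianRing R] [Nontrivial R]
    (hstablyfree : ∀ (M : Type) [AddCommGroup M] [Module R M], Module.Finite R M →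
      (∃ k m : ℕ, Nonempty ((M × (Fin k → R)) ≃ₗ[R] (Fin m → R))) →
      ∃ n : ℕ, Nonempty (M ≃ₗ[R] (Fin n → R)))
    (n : ℕ) :
    ∀ (L : Type) [AddCommGroup L] [Module R L] (b : Module.Basis (Fin (2 * n)) R L)
      (ψ : L →ₗ[R] L →ₗ[R] R), (∀ x, ψ x x = 0) →
      Function.Bijective (fun x : L => ψ x) →
    ∃ e : Module.Basis (Fin n ⊕ Fin n) R L,
      (∀ i j, ψ (e (Sum.inl i)) (e (Sum.inr j)) = if i = j then 1 else 0) ∧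
      (∀ i j, ψ (e (Sum.inl i)) (e (Sum.inl j)) = 0) ∧
      (∀ i j, ψ (e (Sum.inr i)) (e (Sum.inr j)) = 0) := by
  induction n with
  | zero =>
    intro L _ _ b ψ halt hperf
    haveI : IsEmpty (Fin (2 * 0)) := ⟨fun i => absurd i.2 (by omega)⟩
    refine ⟨b.reindex (Equiv.equivOfIsEmpty _ _), ?_, ?_, ?_⟩ <;> intro i <;> exact i.elim0
  | succ n IH =>
    intro L _ _ b ψ halt hperf
    have hskew : ∀ u v : L, ψ u v = -ψ v u := by
      intro u v
      have h := halt (u + v)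
      simp only [map_add, LinearMap.add_apply, halt, zero_add, add_zero] at h
      rw [add_comm] at h
      exact eq_neg_of_add_eq_zero_left h
    -- pick the hyperbolic pair
    set i0 : Fin (2 * (n + 1)) := ⟨0, by omega⟩ with hi0
    obtain ⟨x₁, hx₁⟩ := hperf.2 (b.coord i0)
    set y₁ : L := b i0 with hy₁
    have hψx₁ : ∀ u, ψ x₁ u = b.coord i0 u := fun u => congrArg (fun f => f u) hx₁
    have hxy : ψ x₁ y₁ = 1 := by
      rw [hψx₁, hy₁, Module.Basis.coord_apply, Module.Basis.repr_self, Finsupp.single_eq_same]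
    have hxx : ψ x₁ x₁ = 0 := halt _
    have hyy : ψ y₁ y₁ = 0 := halt _
    have hyx : ψ y₁ x₁ = -1 := by rw [hskew, hxy]
    -- the symplectic complement
    set K : Submodule R L := LinearMap.ker (ψ x₁) ⊓ LinearMap.ker (ψ y₁) with hK
    have hKmem : ∀ z : L, z ∈ K ↔ ψ x₁ z = 0 ∧ ψ y₁ z = 0 := by
      intro z; simp [hK, Submodule.mem_inf, LinearMap.mem_ker]
    -- projection onto K
    set π₀ : L →ₗ[R] L :=
      LinearMap.id + (ψ y₁).smulRight x₁ - (ψ x₁).smulRight y₁ with hπ₀def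
    have hπ₀ : ∀ z, π₀ z = z + ψ y₁ z • x₁ - ψ x₁ z • y₁ := by
      intro z; simp [hπ₀def]
    have hπ₀mem : ∀ z, π₀ z ∈ K := by
      intro z
      rw [hKmem, hπ₀]
      constructor
      · simp [map_add, map_sub, map_smul, hxx, hxy, smul_eq_mul]
      · simp [map_add, map_sub, map_smul, hyy, hyx, smul_eq_mul]
    have hπ₀fix : ∀ z ∈ K, π₀ z = z := by
      intro z hz
      rw [hKmem] at hz
      rw [hπ₀, hz.1, hz.2]
      simp
    set π : L →ₗ[R] K := π₀.codRestrict K hπ₀mem with hπ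
    -- restricted form
    set ψ' : K →ₗ[R] K →ₗ[R] R := ψ.domRestrict₁₂ K K with hψ'
    have hψ'app : ∀ (z w : K), ψ' z w = ψ (z : L) (w : L) := fun z w => rfl
    have halt' : ∀ z : K, ψ' z z = 0 := fun z => halt _
    -- ψ z vanishes on x₁, y₁ for z ∈ K
    have hzx : ∀ z : L, z ∈ K → ψ z x₁ = 0 ∧ ψ z y₁ = 0 := by
      intro z hz
      rw [hKmem] at hz
      constructor
      · rw [hskew, hz.1, neg_zero]
      · rw [hskew, hz.2, neg_zero]
    have hdual : ∀ (z : K) (u : L), ψ (z : L) u = ψ (z : L) (π₀ u) := by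
      intro z u
      rw [hπ₀, map_sub, map_add, map_smul, map_smul, (hzx z z.2).1, (hzx z z.2).2]
      simp
    have hperf' : Function.Bijective (fun z : K => ψ' z) := by
      constructor
      · intro z w h
        have h2 : ψ (z : L) = ψ (w : L) := by
          ext u
          rw [hdual z u, hdual w u]
          have := congrArg (fun f => f (⟨π₀ u, hπ₀mem u⟩ : K)) h
          simpa [hψ'app] using this
        exact Subtype.ext (hperf.1 h2)
      · intro f
        obtain ⟨w, hw⟩ := hperf.2 (f ∘ₗ π)
        have hw' : ψ w = f ∘ₗ π := hw
        refine ⟨⟨π₀ w, hπ₀mem w⟩, ?_⟩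
        ext u
        have h1 : ψ (π₀ w) (u : L) = ψ w (u : L) := by
          have hu := u.2
          rw [hKmem] at hu
          rw [hπ₀, map_sub, map_add, map_smul, map_smul]
          simp [LinearMap.sub_apply, LinearMap.add_apply, LinearMap.smul_apply,
            hu.1, hu.2]
        have h2 : π u.val = u := Subtype.ext (hπ₀fix u.val u.2)
        calc ψ' ⟨π₀ w, hπ₀mem w⟩ u = ψ (π₀ w) (u : L) := rfl
          _ = ψ w (u : L) := h1
          _ = (f ∘ₗ π) u.val := by rw [hw']
          _ = f u := by rw [LinearMap.comp_apply, h2]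
    -- the splitting  R × (R × K) ≃ L
    set φ₀ : R × (R × K) →ₗ[R] L :=
      (LinearMap.toSpanSingleton R L x₁).coprod
        ((LinearMap.toSpanSingleton R L y₁).coprod K.subtype) with hφ₀def
    have hφ₀ : ∀ (a c : R) (z : K), φ₀ (a, c, z) = a • x₁ + (c • y₁ + (z : L)) := by
      intro a c z; rfl
    have hφ₀bij : Function.Bijective φ₀ := by
      constructor
      · intro ⟨a, c, z⟩ ⟨a', c', z'⟩ h
        rw [hφ₀, hφ₀] at h
        have key : ∀ (a c : R) (z : K), ∀ u, u = a • x₁ + (c • y₁ + (z : L)) →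
            ψ u y₁ = a ∧ ψ x₁ u = c := by
          intro a c z u hu
          subst hu
          have hz := hzx z z.2
          have hz' := z.2
          rw [hKmem] at hz'
          constructor
          · simp [map_add, map_smul, LinearMap.add_apply, LinearMap.smul_apply,
              hxy, hyy, hz.2, smul_eq_mul]
          · simp [map_add, map_smul, hxx, hxy, hz'.1, smul_eq_mul]
        obtain ⟨ha, hc⟩ := key a c z _ rfl
        obtain ⟨ha', hc'⟩ := key a' c' z' _ h
        have haa : a = a' := by rw [← ha, ← ha']
        have hcc : c = c' := by rw [← hc, ← hc']
        subst haa; subst hcc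
        have hzz : (z : L) = (z' : L) := by
          have := h
          rwa [add_right_inj, add_right_inj] at this
        exact Prod.ext rfl (Prod.ext rfl (Subtype.ext hzz))
      · intro u
        refine ⟨(-(ψ y₁ u), ψ x₁ u, π u), ?_⟩
        rw [hφ₀]
        have : (π u : L) = π₀ u := rfl
        rw [this, hπ₀]
        module
    set φ : (R × (R × K)) ≃ₗ[R] L := LinearEquiv.ofBijective φ₀ hφ₀bij with hφ
    have hφapp : ∀ p, φ p = φ₀ p := fun p => rfl
    -- finiteness of K
    haveI : Module.Finite R L := Module.Finite.of_basis b
    haveI : IsNoetherian R L := inferInstance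
    haveI : Module.Finite R K := Module.Finite.iff_fg.mpr (IsNoetherian.noetherian K)
    -- stable freeness witness
    set E : (K × (Fin 2 → R)) ≃ₗ[R] (Fin (2 * (n + 1)) → R) :=
      (LinearEquiv.prodComm R K (Fin 2 → R)).trans
        (((LinearEquiv.piFinTwo R (fun _ => R)).prodCongr (LinearEquiv.refl R K)).trans
          ((LinearEquiv.prodAssoc R R R K).trans (φ.trans b.equivFun))) with hE
    obtain ⟨m, ⟨g⟩⟩ := hstablyfree K inferInstance ⟨2, 2 * (n + 1), ⟨E⟩⟩
    have hm : m = 2 * n := by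
      have Emn : (Fin (m + 2) → R) ≃ₗ[R] (Fin (2 * (n + 1)) → R) :=
        (LinearEquiv.funCongrLeft R R finSumFinEquiv).trans
          ((LinearEquiv.sumArrowLequivProdArrow (Fin m) (Fin 2) R R).trans
            ((g.symm.prodCongr (LinearEquiv.refl R (Fin 2 → R))).trans E))
      have := eq_of_fin_equiv R Emn
      omega
    subst hm
    set b' : Module.Basis (Fin (2 * n)) R K := Module.Basis.ofEquivFun g with hb'
    obtain ⟨e', he1, he2, he3⟩ := IH K b' ψ' halt' hperf'
    -- build the final basis
    set B0 : Module.Basis ((Fin 1) ⊕ ((Fin 1) ⊕ (Fin n ⊕ Fin n))) R (R × (R × K)) :=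
      (Module.Basis.singleton (Fin 1) R).prod (((Module.Basis.singleton (Fin 1) R)).prod e') with hB0
    set σ : ((Fin 1) ⊕ ((Fin 1) ⊕ (Fin n ⊕ Fin n))) ≃ (Fin (n + 1) ⊕ Fin (n + 1)) :=
      { toFun := Sum.elim (fun _ => Sum.inl 0)
          (Sum.elim (fun _ => Sum.inr 0)
            (Sum.elim (fun i => Sum.inl i.succ) (fun i => Sum.inr i.succ)))
        invFun := Sum.elim
          (Fin.cases (Sum.inl 0) (fun i => Sum.inr (Sum.inr (Sum.inl i))))
          (Fin.cases (Sum.inr (Sum.inl 0)) (fun i => Sum.inr (Sum.inr (Sum.inr i))))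
        left_inv := by
          rintro (i | (i | (i | i)))
          · simp [Fin.eq_zero i]
          · simp [Fin.eq_zero i]
          · simp
          · simp
        right_inv := by
          rintro (j | j) <;> induction j using Fin.cases <;> simp } with hσ
    set e : Module.Basis (Fin (n + 1) ⊕ Fin (n + 1)) R L := (B0.map φ).reindex σ with he
    have hval1 : e (Sum.inl 0) = x₁ := by
      rw [he, Module.Basis.reindex_apply]
      have : σ.symm (Sum.inl 0) = Sum.inl 0 := by simp [hσ]
      rw [this, Module.Basis.map_apply, hB0]
      simp [Module.Basis.prod_apply, hφapp, hφ₀]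
    have hval2 : ∀ i : Fin n, e (Sum.inl i.succ) = (e' (Sum.inl i) : L) := by
      intro i
      rw [he, Module.Basis.reindex_apply]
      have : σ.symm (Sum.inl i.succ) = Sum.inr (Sum.inr (Sum.inl i)) := by simp [hσ]
      rw [this, Module.Basis.map_apply, hB0]
      simp [Module.Basis.prod_apply, hφapp, hφ₀]
    have hval3 : e (Sum.inr 0) = y₁ := by
      rw [he, Module.Basis.reindex_apply]
      have : σ.symm (Sum.inr 0) = Sum.inr (Sum.inl 0) := by simp [hσ]
      rw [this, Module.Basis.map_apply, hB0]
      simp [Module.Basis.prod_apply, hφapp, hφ₀]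
    have hval4 : ∀ i : Fin n, e (Sum.inr i.succ) = (e' (Sum.inr i) : L) := by
      intro i
      rw [he, Module.Basis.reindex_apply]
      have : σ.symm (Sum.inr i.succ) = Sum.inr (Sum.inr (Sum.inr i)) := by simp [hσ]
      rw [this, Module.Basis.map_apply, hB0]
      simp [Module.Basis.prod_apply, hφapp, hφ₀]
    have hmem : ∀ s, ψ x₁ (e' s : L) = 0 ∧ ψ y₁ (e' s : L) = 0 := by
      intro s
      have := (e' s).2
      rwa [hKmem] at this
    refine ⟨e, ?_, ?_, ?_⟩
    · intro i j
      induction i using Fin.cases with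
      | zero =>
        induction j using Fin.cases with
        | zero => rw [hval1, hval3, hxy]; simp
        | succ j =>
          rw [hval1, hval4 j, (hmem (Sum.inr j)).1]
          simp [(Fin.succ_ne_zero j).symm]
      | succ i =>
        induction j using Fin.cases with
        | zero =>
          rw [hval2 i, hval3, (hzx _ (e' (Sum.inl i)).2).2]
          simp [Fin.succ_ne_zero i]
        | succ j =>
          rw [hval2 i, hval4 j, ← hψ'app, he1 i j]
          simp [Fin.succ_inj]
    · intro i j
      induction i using Fin.cases with
      | zero =>
        induction j using Fin.cases with
        | zero => rw [hval1, hxx]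
        | succ j => rw [hval1, hval2 j, (hmem (Sum.inl j)).1]
      | succ i =>
        induction j using Fin.cases with
        | zero => rw [hval2 i, hval1, (hzx _ (e' (Sum.inl i)).2).1]
        | succ j => rw [hval2 i, hval2 j, ← hψ'app, he2 i j]
    · intro i j
      induction i using Fin.cases with
      | zero =>
        induction j using Fin.cases with
        | zero => rw [hval3, hyy]
        | succ j => rw [hval3, hval4 j, (hmem (Sum.inr j)).2]
      | succ i =>
        induction j using Fin.cases with
        | zero => rw [hval4 i, hval3, (hzx _ (e' (Sum.inr i)).2).2]
        | succ j => rw [hval4 i, hval4 j, ← hψ'app, he3 i j]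

/-- Let `R` be a Noetherian commutative ring such that every finitely
generated stably free `R`-module is free, and let `L` be a free `R`-module of rank `2n`
equipped with a perfect alternating `R`-bilinear pairing `ψ`.  Then `L` admits a
Lagrangian (symplectic) basis. -/
theorem stmt0
    (R : Type) [CommRing R] [IsNoetherianRing R]
    (hstablyfree : ∀ (M : Type) [AddCommGroup M] [Module R M], Module.Finite R M →
      (∃ k m : ℕ, Nonempty ((M × (Fin k → R)) ≃ₗ[R] (Fin m → R))) →
      ∃ n : ℕ, Nonempty (M ≃ₗ[R] (Fin n → R)))
    (n : ℕ) (L : Type) [AddCommGroup L] [Module R L]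
    (b : Module.Basis (Fin (2 * n)) R L)
    (ψ : L →ₗ[R] L →ₗ[R] R)
    (halt : ∀ x, ψ x x = 0)
    (hperf : Function.Bijective fun x : L => ψ x) :
    ∃ e : Module.Basis (Fin n ⊕ Fin n) R L,
      (∀ i j, ψ (e (Sum.inl i)) (e (Sum.inr j)) = if i = j then 1 else 0) ∧
      (∀ i j, ψ (e (Sum.inl i)) (e (Sum.inl j)) = 0) ∧
      (∀ i j, ψ (e (Sum.inr i)) (e (Sum.inr j)) = 0) := by
  rcases subsingleton_or_nontrivial R with hR | hR
  · haveI : Subsingleton L := b.repr.toEquiv.subsingleton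
    refine ⟨Module.Basis.ofRepr (LinearEquiv.ofSubsingleton _ _), ?_, ?_, ?_⟩ <;>
      intro i j <;> exact Subsingleton.elim _ _
  · exact aux_symp R hstablyfree n L b ψ halt hperf
end

section
/- Let R be a Noetherian commutative ring such that every finitely generated stably free R-module is free, and let L be a free R-module of rank 2n with a perfect alternating pairing ψ. If x_1 ∈ L is part of a basis of L and y_1 ∈ L satisfies ψ(x_1, y_1) = 1, then the R-submodule spanned by x_1 and y_1 is free of rank 2, and L decomposes as the direct sum of this submodule and its orthogonal complement L' = {x ∈ L : ψ(x, x_1) = ψ(x, y_1) = 0}, with L' free of rank 2n − 2. -/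
/-- Let `R` be a Noetherian commutative ring such that every finitely
generated stably free `R`-module is free, and `L` a free `R`-module of rank `2n` with a
perfect alternating pairing `ψ`.  If `x₁ ∈ L` is part of a basis of `L` and `y₁`
satisfies `ψ x₁ y₁ = 1`, then the submodule spanned by `x₁, y₁` is free of rank 2, `L`
is the direct sum of this submodule and its orthogonal complement
`L' = {x | ψ x x₁ = 0 ∧ ψ x y₁ = 0}`, and `L'` is free of rank `2n − 2`. -/
theorem stmt1
    (R : Type) [CommRing R] [IsNoetherianRing R]
    (hstablyfree : ∀ (M : Type) [AddCommGroup M] [Module R M], Module.Finite R M →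
      (∃ k m : ℕ, Nonempty ((M × (Fin k → R)) ≃ₗ[R] (Fin m → R))) →
      ∃ n : ℕ, Nonempty (M ≃ₗ[R] (Fin n → R)))
    (n : ℕ) (L : Type) [AddCommGroup L] [Module R L]
    (ψ : L →ₗ[R] L →ₗ[R] R)
    (halt : ∀ x, ψ x x = 0)
    (hperf : Function.Bijective fun x : L => ψ x)
    (x₁ y₁ : L)
    (hx₁ : ∃ (b : Module.Basis (Fin (2 * n)) R L) (i : Fin (2 * n)), b i = x₁)
    (hy₁ : ψ x₁ y₁ = 1) :
    Nonempty (Module.Basis (Fin 2) R (Submodule.span R {x₁, y₁})) ∧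
    IsCompl (Submodule.span R {x₁, y₁})
      (LinearMap.ker (ψ.flip x₁) ⊓ LinearMap.ker (ψ.flip y₁)) ∧
    Nonempty (Module.Basis (Fin (2 * n - 2)) R
      (LinearMap.ker (ψ.flip x₁) ⊓ LinearMap.ker (ψ.flip y₁) : Submodule R L)) := by
  obtain ⟨b, i, hbi⟩ := hx₁
  -- skew-symmetry for the pair
  have hskew : ψ y₁ x₁ = -1 := by
    have h0 := halt (x₁ + y₁)
    simp only [map_add, LinearMap.add_apply, halt, hy₁] at h0
    linear_combination h0
  -- linear independence of x₁, y₁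
  have hli : LinearIndependent R ![x₁, y₁] := by
    rw [LinearIndependent.pair_iff]
    intro s t hst
    have h1 : ψ (s • x₁ + t • y₁) y₁ = 0 := by rw [hst]; simp
    have h2 : ψ (s • x₁ + t • y₁) x₁ = 0 := by rw [hst]; simp
    simp only [map_add, map_smul, LinearMap.add_apply, LinearMap.smul_apply,
      halt, hy₁, hskew, smul_eq_mul, mul_one, mul_zero, mul_neg, add_zero,
      zero_add] at h1 h2
    exact ⟨h1, neg_eq_zero.mp h2⟩
  have hrange : Set.range ![x₁, y₁] = {x₁, y₁} := by
    ext z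
    simp only [Matrix.range_cons, Matrix.range_empty, Set.union_empty,
      Set.union_singleton, Set.mem_insert_iff, Set.mem_singleton_iff]
    tauto
  have bspan : Module.Basis (Fin 2) R (Submodule.span R {x₁, y₁}) := by
    have := Module.Basis.span hli
    rwa [hrange] at this
  -- the projection
  set P : Submodule R L := Submodule.span R {x₁, y₁} with hP
  set K : Submodule R L := LinearMap.ker (ψ.flip x₁) ⊓ LinearMap.ker (ψ.flip y₁) with hK
  set π : L →ₗ[R] L :=
    (LinearMap.toSpanSingleton R L x₁).comp (ψ.flip y₁) -
      (LinearMap.toSpanSingleton R L y₁).comp (ψ.flip x₁) with hπ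
  have hπapp : ∀ z, π z = ψ z y₁ • x₁ - ψ z x₁ • y₁ := fun z => rfl
  have hπx : π x₁ = x₁ := by
    rw [hπapp, hy₁, halt]; simp
  have hπy : π y₁ = y₁ := by
    rw [hπapp, halt, hskew]; simp
  have hmemP : ∀ z, π z ∈ P := by
    intro z
    rw [hπapp]
    exact sub_mem
      (Submodule.smul_mem _ _ (Submodule.subset_span (by simp)))
      (Submodule.smul_mem _ _ (Submodule.subset_span (by simp)))
  have hid : ∀ z ∈ P, π z = z := by
    intro z hz
    induction hz using Submodule.span_induction with
    | mem w hw =>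
      rcases hw with h | h
      · rw [h, hπx]
      · rw [Set.mem_singleton_iff] at h; rw [h, hπy]
    | zero => simp
    | add a b _ _ ha hb => rw [map_add, ha, hb]
    | smul r a _ ha => rw [map_smul, ha]
  have hkerπ : LinearMap.ker π = K := by
    ext z
    simp only [LinearMap.mem_ker, hK, Submodule.mem_inf, LinearMap.flip_apply]
    constructor
    · intro h
      have h1 : ψ (π z) y₁ = 0 := by rw [h]; simp
      have h2 : ψ (π z) x₁ = 0 := by rw [h]; simp
      rw [hπapp] at h1 h2
      simp only [map_sub, map_smul, LinearMap.sub_apply, LinearMap.smul_apply,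
        halt, hy₁, hskew, smul_eq_mul, mul_one, mul_zero, mul_neg, sub_zero,
        zero_sub] at h1 h2
      exact ⟨by simpa using h2, h1⟩
    · intro ⟨h1, h2⟩
      rw [hπapp, h1, h2]
      simp
  -- IsCompl
  have hcompl : IsCompl P K := by
    have := LinearMap.isCompl_of_proj (f := π.codRestrict P hmemP)
      (fun x : P => by
        ext
        simp [LinearMap.codRestrict_apply, hid x.1 x.2])
    rwa [LinearMap.ker_codRestrict, hkerπ] at this
  refine ⟨⟨bspan⟩, hcompl, ?_⟩
  -- finiteness
  have hfinL : Module.Finite R L := Module.Finite.of_basis b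
  have hnoeth : IsNoetherian R L := isNoetherian_of_isNoetherianRing_of_finite R L
  have hfinK : Module.Finite R K := Module.Finite.iff_fg.mpr (IsNoetherian.noetherian K)
  -- the equivalence K × R² ≃ R^(2n)
  have eP : P ≃ₗ[R] (Fin 2 → R) := bspan.equivFun
  have eL : L ≃ₗ[R] (Fin (2 * n) → R) := b.equivFun
  have ePK : (P × K) ≃ₗ[R] L := Submodule.prodEquivOfIsCompl P K hcompl
  have eKR : (K × (Fin 2 → R)) ≃ₗ[R] (Fin (2 * n) → R) :=
    ((LinearEquiv.prodComm R K (Fin 2 → R)).trans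
      ((LinearEquiv.refl R (Fin 2 → R)).prodCongr (LinearEquiv.refl R K))).trans
      (((eP.symm.prodCongr (LinearEquiv.refl R K)).trans ePK).trans eL)
  obtain ⟨m, ⟨eK⟩⟩ := hstablyfree K hfinK ⟨2, 2 * n, ⟨eKR⟩⟩
  -- identify m with 2n - 2
  by_cases hR : Nontrivial R
  · have hfree : Module.Free R K := Module.Free.of_equiv eK.symm
    have h1 : Module.finrank R K = m := by
      rw [eK.finrank_eq, Module.finrank_fin_fun]
    have h2 : Module.finrank R (K × (Fin 2 → R)) = 2 * n := by
      rw [eKR.finrank_eq, Module.finrank_fin_fun]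
    rw [Module.finrank_prod, h1, Module.finrank_fin_fun] at h2
    have hm : m = 2 * n - 2 := by omega
    rw [hm] at eK
    exact ⟨Module.Basis.ofEquivFun eK⟩
  · -- trivial ring: everything is zero
    have hsub : Subsingleton R := not_nontrivial_iff_subsingleton.mp hR
    have : Subsingleton K := Module.subsingleton R K
    have : Subsingleton (Fin (2 * n - 2) → R) := by infer_instance
    exact ⟨Module.Basis.ofEquivFun (LinearEquiv.ofSubsingleton _ _)⟩
end

section
/- Let K₀ be a field, O_{K₀} ⊆ K₀ a Dedekind domain with fraction field K₀, K a finite separable field extension of K₀ with ring of integers (maximal O_{K₀}-order) O_K, and (V, ψ) a non-degenerate alternating K₀-bilinear form on a finite-dimensional K-vector space V satisfying ψ(ax, y) = ψ(x, ay) for all a ∈ K. Let ψ_K: V × V → K be the unique K-bilinear form with Tr_{K/K₀} ∘ ψ_K = ψ. Then an O_K-lattice L in V is self-dual with respect to ψ if and only if all invariant factors of L with respect to ψ_K equal the inverse different D_{K/K₀}^{−1}. -/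
open scoped nonZeroDivisors


/-- Let `O_{K₀} = A` be a Dedekind domain with fraction field `K₀`,
`K/K₀` a finite separable field extension with ring of integers (maximal order) `B`,
and `(V, ψ)` a non-degenerate alternating `K₀`-bilinear form on a `K`-vector space
satisfying `ψ(ax, y) = ψ(x, ay)` for `a ∈ K`, with `K`-bilinear lift `ψ_K` satisfying
`Tr_{K/K₀} ∘ ψ_K = ψ`.  If `L = Σ O_K x_i + Σ 𝔞_j y_j` with respect to a symplectic
`K`-basis of `(V, ψ_K)` and nonzero fractional ideals `𝔞_j`, then `L` is self-dual with
respect to `ψ` if and only if all the invariant factors `𝔞_j` equal the inverse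
different `D_{K/K₀}^{-1}`. -/
theorem stmt6
    (A : Type) [CommRing A] [IsDomain A] [IsDedekindDomain A]
    (K₀ : Type) [Field K₀] [Algebra A K₀] [IsFractionRing A K₀]
    (K : Type) [Field K] [Algebra K₀ K] [FiniteDimensional K₀ K]
    [Algebra.IsSeparable K₀ K]
    (B : Type) [CommRing B] [Algebra A B] [Algebra B K] [Algebra A K]
    [IsScalarTower A B K] [IsScalarTower A K₀ K] [IsIntegralClosure B A K]
    (V : Type) [AddCommGroup V] [Module K V] [Module K₀ V] [IsScalarTower K₀ K V]
    (n : ℕ)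
    (ψK : V →ₗ[K] V →ₗ[K] K)
    (ψ : V →ₗ[K₀] V →ₗ[K₀] K₀)
    (hψ : ∀ x y, ψ x y = Algebra.trace K₀ K (ψK x y))
    (halt : ∀ x, ψK x x = 0)
    (hnd : ∀ x, (∀ y, ψK x y = 0) → x = 0)
    -- a symplectic K-basis of (V, ψ_K)
    (b : Module.Basis (Fin n ⊕ Fin n) K V)
    (hbxx : ∀ i j, ψK (b (Sum.inl i)) (b (Sum.inl j)) = 0)
    (hbyy : ∀ i j, ψK (b (Sum.inr i)) (b (Sum.inr j)) = 0)
    (hbxy : ∀ i j, ψK (b (Sum.inl i)) (b (Sum.inr j)) = if i = j then 1 else 0)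
    -- the invariant factors: nonzero fractional O_K-ideals
    (𝔞 : Fin n → Submodule B K)
    (h𝔞ne : ∀ j, 𝔞 j ≠ ⊥)
    (h𝔞fr : ∀ j, ∃ s : B, s ≠ 0 ∧
      ∀ c ∈ 𝔞 j, ∃ t : B, algebraMap B K s * c = algebraMap B K t)
    -- the lattice L = Σ O_K x_i + Σ 𝔞_j y_j
    (L : Set V)
    (hL : L = {v | ∃ (c : Fin n → B) (d : Fin n → K), (∀ j, d j ∈ 𝔞 j) ∧
      v = (∑ i, algebraMap B K (c i) • b (Sum.inl i))
          + ∑ j, d j • b (Sum.inr j)}) :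
    -- L is self-dual ↔ all invariant factors equal the inverse different
    {x : V | ∀ y ∈ L, ψ x y ∈ Set.range (algebraMap A K₀)} = L ↔
      ∀ j, (𝔞 j : Set K) =
        {c : K | ∀ r : B,
          Algebra.trace K₀ K (c * algebraMap B K r) ∈ Set.range (algebraMap A K₀)} := by
  classical
  haveI : IsDomain B := (IsIntegralClosure.algebraMap_injective B A K).isDomain _
  haveI : IsFractionRing B K := IsIntegralClosure.isFractionRing_of_finite_extension A K₀ K B
  haveI : IsDedekindDomain B := IsIntegralClosure.isDedekindDomain A K₀ K B
  set Rng : Set K₀ := Set.range (algebraMap A K₀) with hRng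
  set T := Algebra.trace K₀ K with hT
  set Dset : Set K := {c : K | ∀ r : B, T (c * algebraMap B K r) ∈ Rng} with hDset
  -- basic closure properties of Rng
  have hmem : ∀ t : K₀, t ∈ Rng ↔ t ∈ (algebraMap A K₀).range := fun t =>
    ⟨fun ⟨r, h⟩ => ⟨r, h⟩, fun ⟨r, h⟩ => ⟨r, h⟩⟩
  have hneg : ∀ t : K₀, -t ∈ Rng → t ∈ Rng := by
    intro t ht
    rw [hmem] at ht ⊢
    simpa using neg_mem ht
  have hneg' : ∀ t : K₀, t ∈ Rng → -t ∈ Rng := by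
    intro t ht; rw [hmem] at ht ⊢; exact neg_mem ht
  have hadd : ∀ s t : K₀, s ∈ Rng → t ∈ Rng → s + t ∈ Rng := by
    intro s t hs ht; rw [hmem] at hs ht ⊢; exact add_mem hs ht
  have hsum : ∀ (f : Fin n → K₀), (∀ i, f i ∈ Rng) → (∑ i, f i) ∈ Rng := by
    intro f hf
    rw [hmem]
    exact sum_mem fun i _ => (hmem _).mp (hf i)
  -- skew symmetry and pairing computations
  have hskew : ∀ u v : V, ψK v u = -ψK u v := by
    intro u v
    have h := halt (u + v)
    simp only [map_add, LinearMap.add_apply, halt] at h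
    linear_combination h
  have hyx : ∀ i j, ψK (b (Sum.inr i)) (b (Sum.inl j)) = -(if j = i then 1 else 0) := by
    intro i j; rw [hskew, hbxy]
  have hpx : ∀ (a e : Fin n → K) (j : Fin n),
      ψK (∑ i, a i • b (Sum.inl i) + ∑ i, e i • b (Sum.inr i)) (b (Sum.inl j)) = -(e j) := by
    intro a e j
    simp only [map_add, LinearMap.add_apply, map_sum, LinearMap.sum_apply, map_smul,
      LinearMap.smul_apply, smul_eq_mul, hbxx, hyx, mul_zero, mul_neg, mul_ite, mul_one,
      Finset.sum_const_zero, zero_add, Finset.sum_neg_distrib]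
    rw [Finset.sum_ite_eq (Finset.univ) j e]
    simp
  have hpy : ∀ (a e : Fin n → K) (j : Fin n),
      ψK (∑ i, a i • b (Sum.inl i) + ∑ i, e i • b (Sum.inr i)) (b (Sum.inr j)) = a j := by
    intro a e j
    simp only [map_add, LinearMap.add_apply, map_sum, LinearMap.sum_apply, map_smul,
      LinearMap.smul_apply, smul_eq_mul, hbyy, hbxy, mul_zero, mul_ite, mul_one,
      Finset.sum_const_zero, add_zero]
    rw [Finset.sum_ite_eq' (Finset.univ) j a]
    simp
  -- membership of scaled basis vectors in L
  have hxmemL : ∀ (r : B) (j : Fin n), algebraMap B K r • b (Sum.inl j) ∈ L := by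
    intro r j
    rw [hL]
    refine ⟨fun k => if k = j then r else 0, 0, fun k => (𝔞 k).zero_mem, ?_⟩
    simp only [Pi.zero_apply, zero_smul, Finset.sum_const_zero, add_zero,
      apply_ite (algebraMap B K), map_zero, ite_smul, zero_smul]
    rw [Finset.sum_ite_eq' (Finset.univ) j]
    simp
  have hymemL : ∀ (c : K) (j : Fin n), c ∈ 𝔞 j → c • b (Sum.inr j) ∈ L := by
    intro c j hc
    rw [hL]
    refine ⟨0, fun k => if k = j then c else 0, ?_, ?_⟩
    · intro k
      by_cases h : k = j
      · subst h; simpa using hc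
      · simp [h]
    · simp only [map_zero, zero_smul, Finset.sum_const_zero, zero_add, ite_smul]
      rw [Finset.sum_ite_eq' (Finset.univ) j]
      simp
  -- Dset is the trace dual of 1
  have hDtd : ∀ c : K, c ∈ Dset ↔ c ∈ Submodule.traceDual A K₀ (1 : Submodule B K) := by
    intro c
    rw [Submodule.mem_traceDual]
    constructor
    · intro hc a haa
      obtain ⟨r, hr⟩ := Submodule.mem_one.mp haa
      rw [Algebra.traceForm_apply, ← hr]
      exact (hmem _).mp (hc r)
    · intro hc r
      rw [hmem]
      exact hc _ (Submodule.mem_one.mpr ⟨r, rfl⟩)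
  -- the key fact: the trace dual of the trace dual of 1 is 1
  have e1 : FractionalIdeal.dual A K₀ (1 : FractionalIdeal B⁰ K) ≠ 0 :=
    FractionalIdeal.dual_ne_zero A K₀ one_ne_zero
  have e2 : Submodule.traceDual A K₀ (Submodule.traceDual A K₀ (1 : Submodule B K))
      = (1 : Submodule B K) := by
    rw [← FractionalIdeal.coe_dual_one, ← FractionalIdeal.coe_dual A K₀ e1,
      FractionalIdeal.dual_dual, FractionalIdeal.coe_one]
  constructor
  · -- self-dual → invariant factors are the inverse different
    intro hsd j
    ext c
    constructor
    · intro hc r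
      have hx : (c • b (Sum.inr j) : V) ∈ {x : V | ∀ y ∈ L, ψ x y ∈ Rng} := by
        rw [hsd]
        exact hymemL c j hc
      have := hx _ (hxmemL r j)
      rw [hψ] at this
      have hval : ψK (c • b (Sum.inr j)) (algebraMap B K r • b (Sum.inl j))
          = -(c * algebraMap B K r) := by
        simp [hyx, mul_comm]
      rw [hval] at this
      exact hneg _ (by simpa using this)
    · intro hc
      have hx : (c • b (Sum.inr j) : V) ∈ {x : V | ∀ y ∈ L, ψ x y ∈ Rng} := by
        intro y hy
        rw [hL] at hy
        obtain ⟨c', d', hd', rfl⟩ := hy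
        rw [hψ]
        have hval : ψK (c • b (Sum.inr j))
            ((∑ i, algebraMap B K (c' i) • b (Sum.inl i)) + ∑ k, d' k • b (Sum.inr k))
            = -(c * algebraMap B K (c' j)) := by
          simp only [map_smul, LinearMap.smul_apply, map_add, map_sum, smul_eq_mul,
            hyx, hbyy, mul_zero, Finset.sum_const_zero, add_zero, mul_neg, mul_ite,
            mul_one, Finset.sum_neg_distrib]
          rw [Finset.sum_ite_eq']
          simp [mul_comm]
        rw [hval, map_neg]
        exact hneg' _ (hc (c' j))
      rw [hsd, hL] at hx
      obtain ⟨c₀, d₀, hd₀, hx⟩ := hx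
      -- compare coordinates via the basis
      have hrepr : b.repr (c • b (Sum.inr j)) (Sum.inr j) = c := by
        simp [Finsupp.single_apply]
      have hrepr2 : b.repr ((∑ i, algebraMap B K (c₀ i) • b (Sum.inl i))
          + ∑ k, d₀ k • b (Sum.inr k)) (Sum.inr j) = d₀ j := by
        have : (∑ i, algebraMap B K (c₀ i) • b (Sum.inl i)) + ∑ k, d₀ k • b (Sum.inr k)
            = ∑ i : Fin n ⊕ Fin n,
              (Sum.elim (fun i => algebraMap B K (c₀ i)) d₀) i • b i := by
          rw [Fintype.sum_sum_type]
          simp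
        rw [this, b.repr_sum_self]
        simp
      rw [hx] at hrepr
      rw [hrepr2] at hrepr
      have := hd₀ j
      rw [hrepr] at this
      exact this
  · -- invariant factors are the inverse different → self-dual
    intro h𝔞
    ext x
    simp only [Set.mem_setOf_eq]
    constructor
    · -- dual ⊆ L
      intro hx
      set a : Fin n → K := fun i => b.repr x (Sum.inl i) with ha
      set e : Fin n → K := fun i => b.repr x (Sum.inr i) with he
      have hxrepr : x = ∑ i, a i • b (Sum.inl i) + ∑ i, e i • b (Sum.inr i) := by
        conv_lhs => rw [← b.sum_repr x]
        rw [Fintype.sum_sum_type]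
      -- the y-coordinates lie in Dset = 𝔞
      have hej : ∀ j, e j ∈ 𝔞 j := by
        intro j
        have : e j ∈ Dset := by
          intro r
          have := hx _ (hxmemL r j)
          rw [hψ] at this
          have hval : ψK x (algebraMap B K r • b (Sum.inl j))
              = -(e j * algebraMap B K r) := by
            conv_lhs => rw [hxrepr]
            rw [map_smul, smul_eq_mul, hpx]
            ring
          rw [hval, map_neg] at this
          exact hneg _ (hneg' _ (hneg _ this))
        have := (h𝔞 j) ▸ this
        exact this
      -- the x-coordinates lie in B
      have haj : ∀ j, ∃ r : B, algebraMap B K r = a j := by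
        intro j
        have hmem2 : a j ∈ Submodule.traceDual A K₀
            (Submodule.traceDual A K₀ (1 : Submodule B K)) := by
          rw [Submodule.mem_traceDual]
          intro t ht
          have htD : t ∈ Dset := (hDtd t).mpr ht
          have ht𝔞 : t ∈ 𝔞 j := by
            have := (h𝔞 j) ▸ htD
            exact this
          have := hx _ (hymemL t j ht𝔞)
          rw [hψ] at this
          have hval : ψK x (t • b (Sum.inr j)) = t * a j := by
            conv_lhs => rw [hxrepr]
            rw [map_smul, smul_eq_mul, hpy]
          rw [hval] at this
          rw [Algebra.traceForm_apply, mul_comm]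
          exact (hmem _).mp this
        rw [e2] at hmem2
        exact Submodule.mem_one.mp hmem2
      choose cc hcc using haj
      rw [hL]
      exact ⟨cc, e, hej, by rw [hxrepr]; simp [hcc]⟩
    · -- L ⊆ dual
      intro hx y hy
      rw [hL] at hx hy
      obtain ⟨c, d, hd, rfl⟩ := hx
      obtain ⟨c', d', hd', rfl⟩ := hy
      rw [hψ]
      have hval : ψK ((∑ i, algebraMap B K (c i) • b (Sum.inl i)) + ∑ k, d k • b (Sum.inr k))
          ((∑ i, algebraMap B K (c' i) • b (Sum.inl i)) + ∑ k, d' k • b (Sum.inr k))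
          = (∑ i, algebraMap B K (c' i) * -(d i)) + ∑ k, d' k * algebraMap B K (c k) := by
        conv_lhs => rw [map_add, map_sum, map_sum]
        simp only [map_smul, LinearMap.smul_apply, smul_eq_mul, hpx, hpy]
      rw [hval, map_add, map_sum, map_sum]
      apply hadd
      · apply hsum
        intro i
        have hdi : d i ∈ Dset := by
          have h2 : d i ∈ (𝔞 i : Set K) := hd i
          rw [h𝔞 i] at h2
          exact h2
        have : T (d i * algebraMap B K (c' i)) ∈ Rng := hdi (c' i)
        have h2 : algebraMap B K (c' i) * -(d i) = -(d i * algebraMap B K (c' i)) := by ring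
        rw [h2, map_neg]
        exact hneg' _ this
      · apply hsum
        intro k
        have hdk : d' k ∈ Dset := by
          have h2 : d' k ∈ (𝔞 k : Set K) := hd' k
          rw [h𝔞 k] at h2
          exact h2
        exact hdk (c k)
end

section
/- Let p ≡ 1 (mod 4) be a prime, F = ℚ(√p) with completion F₂ = F ⊗_ℚ ℚ₂, A₂ = ℤ[√p] ⊗ ℤ₂, and O_{F₂} the maximal order. Let (V₂, ψ₂) be a 4-dimensional symplectic ℚ₂-space which is a rank-2 free F₂-module with ψ₂(ax, y) = ψ₂(x, ay) for a ∈ F₂. Then there is no self-dual A₂-lattice L in (V₂, ψ₂) with L ≅ O_{F₂} ⊕ A₂ as an A₂-module. -/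
/-- Let `p ≡ 1 (mod 4)` be prime, `F₂ = ℚ(√p) ⊗ ℚ₂` (a quadratic
étale ℚ₂-algebra generated by `s` with `s² = p`), `O_{F₂} = ℤ₂[(1+s)/2]` the maximal
order and `A₂ = ℤ₂[√p]`.  Let `(V₂, ψ₂)` be a 4-dimensional symplectic ℚ₂-space which
is a rank-2 free `F₂`-module with `ψ₂(ax,y) = ψ₂(x,ay)`.  Then there is no self-dual
`A₂`-lattice `L` in `(V₂, ψ₂)` with `L ≅ O_{F₂} ⊕ A₂`, i.e. no `F₂`-basis `e₀, e₁`
such that `L = O_{F₂}·e₀ + A₂·e₁` is self-dual. -/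
theorem stmt9
    (p : ℕ) [Fact p.Prime] (hp4 : p % 4 = 1)
    (F₂ : Type) [CommRing F₂] [Algebra ℚ_[2] F₂]
    (s : F₂) (hs : s ^ 2 = (p : F₂))
    (bF : Module.Basis (Fin 2) ℚ_[2] F₂) (hb0 : bF 0 = 1) (hb1 : bF 1 = s)
    (t : F₂) (ht : 2 * t = 1 + s)   -- t = (1 + √p)/2, so O_{F₂} = ℤ₂[t]
    (V : Type) [AddCommGroup V] [Module ℚ_[2] V] [Module F₂ V]
    [IsScalarTower ℚ_[2] F₂ V]
    (ψ : V →ₗ[ℚ_[2]] V →ₗ[ℚ_[2]] ℚ_[2])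
    (halt : ∀ x, ψ x x = 0)
    (hnd : ∀ x, (∀ y, ψ x y = 0) → x = 0)
    (hherm : ∀ (a : F₂) (x y : V), ψ (a • x) y = ψ x (a • y)) :
    ¬ ∃ e : Module.Basis (Fin 2) F₂ V,
      (let L : Set V := {v | ∃ a b c d : ℤ_[2],
         v = (((a : ℚ_[2]) • (1 : F₂) + (b : ℚ_[2]) • t) • e 0)
             + (((c : ℚ_[2]) • (1 : F₂) + (d : ℚ_[2]) • s) • e 1)}
       {x : V | ∀ y ∈ L, ψ x y ∈ Set.range ((↑) : ℤ_[2] → ℚ_[2])} = L) := by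
  rintro ⟨e, hd⟩
  simp only [] at hd
  set L : Set V := {v | ∃ a b c d : ℤ_[2],
       v = (((a : ℚ_[2]) • (1 : F₂) + (b : ℚ_[2]) • t) • e 0)
           + (((c : ℚ_[2]) • (1 : F₂) + (d : ℚ_[2]) • s) • e 1)} with hLdef
  set R : Set ℚ_[2] := Set.range ((↑) : ℤ_[2] → ℚ_[2]) with hRdef
  -- basic arithmetic facts
  obtain ⟨m, hm⟩ : ∃ m : ℕ, p = 4 * m + 1 := ⟨p / 4, by omega⟩
  have hph : (p : F₂) = 4 * (m : F₂) + 1 := by rw [hm]; push_cast; ring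
  have cancel2 : ∀ x y : F₂, 2 * x = 2 * y → x = y := by
    intro x y h
    have h2 : (2 : ℚ_[2]) • x = (2 : ℚ_[2]) • y := by
      rw [Algebra.smul_def, Algebra.smul_def, map_ofNat]
      exact h
    exact smul_right_injective F₂ (by norm_num : (2 : ℚ_[2]) ≠ 0) h2
  have htt : t * t = t + (m : F₂) := by
    apply cancel2; apply cancel2
    linear_combination (2 * t - 1 + s) * ht + hs + hph
  have hts : t * s = 2 * (m : F₂) + t := by
    apply cancel2
    linear_combination (s - 1) * ht + hs + hph
  -- natCast-smul fact over V
  have hnsmul : ∀ (n : ℕ) (v : V), ((n : F₂)) • v = ((n : ℚ_[2])) • v := by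
    intro n v
    rw [← map_natCast (algebraMap ℚ_[2] F₂) n, algebraMap_smul]
  -- skew symmetry
  have hskew : ∀ x y : V, ψ x y = -ψ y x := by
    intro x y
    have h := halt (x + y)
    rw [map_add] at h
    simp only [LinearMap.add_apply, map_add, halt] at h
    linear_combination h
  have hsame : ∀ (γ : F₂) (v : V), ψ v (γ • v) = 0 := by
    intro γ v
    have h1 : ψ (γ • v) v = ψ v (γ • v) := hherm γ v v
    have h2 : ψ (γ • v) v = -ψ v (γ • v) := hskew _ _
    have h3 : (2 : ℚ_[2]) * ψ v (γ • v) = 0 := by linear_combination h2 - h1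
    have h2ne : (2 : ℚ_[2]) ≠ 0 := by norm_num
    exact (mul_eq_zero.mp h3).resolve_left h2ne
  -- membership in L
  have hmem : ∀ a b c d : ℤ_[2],
      ((((a : ℚ_[2]) • (1 : F₂) + (b : ℚ_[2]) • t) • e 0)
        + (((c : ℚ_[2]) • (1 : F₂) + (d : ℚ_[2]) • s) • e 1)) ∈ L :=
    fun a b c d => ⟨a, b, c, d, rfl⟩
  have he0 : e 0 ∈ L := by simpa using hmem 1 0 0 0
  have he1 : e 1 ∈ L := by simpa using hmem 0 0 1 0
  have hte0 : t • e 0 ∈ L := by simpa using hmem 0 1 0 0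
  have hse1 : s • e 1 ∈ L := by simpa using hmem 0 0 0 1
  -- integrality of ψ on L × L
  have hint : ∀ x ∈ L, ∀ y ∈ L, ψ x y ∈ R := by
    intro x hx y hy
    rw [← hd] at hx
    exact hx y hy
  -- closure properties of R
  have hRiff : ∀ x : ℚ_[2], x ∈ R ↔ ‖x‖ ≤ 1 := by
    intro x
    constructor
    · rintro ⟨a, rfl⟩
      exact a.2
    · intro h
      exact ⟨⟨x, h⟩, rfl⟩
  have hRadd : ∀ x ∈ R, ∀ y ∈ R, x + y ∈ R := by
    intro x hx y hy
    rw [hRiff] at hx hy ⊢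
    exact le_trans (Padic.nonarchimedean x y) (max_le hx hy)
  have hRmul : ∀ x ∈ R, ∀ y ∈ R, x * y ∈ R := by
    intro x hx y hy
    rw [hRiff] at hx hy ⊢
    rw [norm_mul]
    nlinarith [norm_nonneg x, norm_nonneg y]
  have hRneg : ∀ x ∈ R, -x ∈ R := by
    intro x hx
    rw [hRiff] at hx ⊢
    rwa [norm_neg]
  have hRnat : ∀ n : ℕ, (n : ℚ_[2]) ∈ R := by
    intro n
    rw [hRiff]
    exact_mod_cast Padic.norm_int_le_one (n : ℤ)
  -- key integrality: ψ (e 1) (t • e 0) ∈ R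
  have hkey0 : ψ (e 0) (t • e 1) ∈ R := by
    have h1 : ψ (t • e 0) (s • e 1) ∈ R := hint _ hte0 _ hse1
    have h2 : ψ (t • e 0) (s • e 1)
        = ((2 * m : ℕ) : ℚ_[2]) * ψ (e 0) (e 1) + ψ (e 0) (t • e 1) := by
      rw [hherm t (e 0) (s • e 1), smul_smul, hts,
        show (2 * (m : F₂) + t) = ((2 * m : ℕ) : F₂) + t by push_cast; ring,
        add_smul, map_add, hnsmul, map_smul, smul_eq_mul]
    have h3 : ψ (e 0) (t • e 1)
        = ψ (t • e 0) (s • e 1) + (-((2 * m : ℕ) : ℚ_[2])) * ψ (e 0) (e 1) := by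
      rw [h2]; ring
    rw [h3]
    exact hRadd _ h1 _ (hRmul _ (hRneg _ (hRnat (2 * m))) _ (hint _ he0 _ he1))
  have hkey : ψ (e 1) (t • e 0) ∈ R := by
    have h1 : ψ (e 1) (t • e 0) = -ψ (e 0) (t • e 1) := by
      rw [← hherm t (e 1) (e 0)]
      exact hskew _ _
    rw [h1]
    exact hRneg _ hkey0
  -- t • e 1 belongs to the dual, hence to L
  have hdualmem : t • e 1 ∈ L := by
    rw [← hd]
    rintro y ⟨a, b, c, d, rfl⟩
    rw [map_add]
    have hsecond : ψ (t • e 1) ((((c : ℚ_[2]) • (1 : F₂) + (d : ℚ_[2]) • s) • e 1)) = 0 := by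
      rw [hherm, smul_smul]
      exact hsame _ _
    have hexp : t * ((a : ℚ_[2]) • (1 : F₂) + (b : ℚ_[2]) • t)
        = ((b : ℚ_[2]) * (m : ℚ_[2])) • (1 : F₂) + ((a : ℚ_[2]) + (b : ℚ_[2])) • t := by
      simp only [Algebra.smul_def, map_add, map_mul, map_natCast, mul_one]
      linear_combination (algebraMap ℚ_[2] F₂ (b : ℚ_[2])) * htt
    have hfirst : ψ (t • e 1) ((((a : ℚ_[2]) • (1 : F₂) + (b : ℚ_[2]) • t) • e 0))
        = ((b : ℚ_[2]) * (m : ℚ_[2])) * ψ (e 1) (e 0)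
          + ((a : ℚ_[2]) + (b : ℚ_[2])) * ψ (e 1) (t • e 0) := by
      rw [hherm, smul_smul, hexp, add_smul, map_add, smul_assoc, one_smul,
        smul_assoc, map_smul, map_smul, smul_eq_mul, smul_eq_mul]
    rw [hsecond, hfirst, add_zero]
    refine hRadd _ (hRmul _ (hRmul _ ⟨b, rfl⟩ _ (hRnat m)) _ (hint _ he1 _ he0)) _
      (hRmul _ (hRadd _ ⟨a, rfl⟩ _ ⟨b, rfl⟩) _ hkey)
  -- extract coordinates via the basis e
  obtain ⟨a, b, c, d, heq⟩ := hdualmem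
  have hco : t = (c : ℚ_[2]) • (1 : F₂) + (d : ℚ_[2]) • s := by
    have h1 := congrArg (fun v => e.repr v 1) heq
    simp only [map_add, map_smul, Finsupp.add_apply, Finsupp.smul_apply] at h1
    rw [Module.Basis.repr_self, Module.Basis.repr_self] at h1
    simpa [Finsupp.single_apply] using h1
  have hco' : t = algebraMap ℚ_[2] F₂ (c : ℚ_[2]) + algebraMap ℚ_[2] F₂ (d : ℚ_[2]) * s := by
    rw [hco]; simp only [Algebra.smul_def, mul_one]
  -- compare with 2t = 1 + s in the basis bF
  have h2t : (2 * (c : ℚ_[2])) • bF 0 + (2 * (d : ℚ_[2])) • bF 1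
      = (1 : ℚ_[2]) • bF 0 + (1 : ℚ_[2]) • bF 1 := by
    rw [hb0, hb1, one_smul, one_smul]
    simp only [Algebra.smul_def, map_mul, map_ofNat, mul_one]
    linear_combination ht - 2 * hco'
  have hcc : 2 * (c : ℚ_[2]) = 1 := by
    have h1 := congrArg (fun v => bF.repr v 0) h2t
    simp only [map_add, map_smul, Finsupp.add_apply, Finsupp.smul_apply,
      Module.Basis.repr_self] at h1
    simpa [Finsupp.single_apply] using h1
  -- contradiction: 2 is not invertible in ℤ₂
  have hcz : (2 * c : ℤ_[2]) = 1 := by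
    apply Subtype.coe_injective
    show ((2 * c : ℤ_[2]) : ℚ_[2]) = ((1 : ℤ_[2]) : ℚ_[2])
    push_cast
    exact hcc
  have hz := congrArg (PadicInt.toZMod) hcz
  rw [map_mul, map_one] at hz
  have h2z : (PadicInt.toZMod (2 : ℤ_[2])) = 0 := by
    rw [show (2 : ℤ_[2]) = ((2 : ℕ) : ℤ_[2]) by push_cast; ring, map_natCast]
    decide
  rw [h2z, zero_mul] at hz
  exact zero_ne_one hz
end

section
/- Let p ≡ 1 (mod 4) be a prime and O_{F₂} = O_F ⊗ ℤ₂ for F = ℚ(√p), with A₂ = ℤ₂[√p] ⊂ O_{F₂} of index 2. Let 𝒪₄ ⊗ ℤ₂ = {(a b; c d) ∈ Mat₂(O_{F₂}) : b ∈ 2O_{F₂}} and 𝒪₈ ⊗ ℤ₂ = {(a b; c d) ∈ 𝒪₄ ⊗ ℤ₂ : a ∈ A₂}. Then (𝒪₈ ⊗ ℤ₂)¹ is a normal subgroup of (𝒪₄ ⊗ ℤ₂)¹, and if p ≡ 5 (mod 8) (so that O_{F₂}/2O_{F₂} ≅ 𝔽₄), the quotient (𝒪₄ ⊗ ℤ₂)¹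 / (𝒪₈ ⊗ ℤ₂)¹ is isomorphic to 𝔽₄^× (cyclic of order 3), via (a b; c d) ↦ a mod 2O_{F₂}. -/
open Matrix

/-- The group `(𝒪₄ ⊗ ℤ₂)¹`: elements of `SL₂(R)` whose upper-right entry is
divisible by 2. -/
def sl2UpperDiv (R : Type) [CommRing R] : Subgroup (Matrix.SpecialLinearGroup (Fin 2) R) where
  carrier := {g | (2 : R) ∣ g.1 0 1}
  one_mem' := by
    simp only [Set.mem_setOf_eq, Matrix.SpecialLinearGroup.coe_one]
    rw [Matrix.one_apply_ne (by decide)]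
    exact dvd_zero 2
  mul_mem' := by
    intro a b ha hb
    simp only [Set.mem_setOf_eq, Matrix.SpecialLinearGroup.coe_mul] at *
    rw [Matrix.mul_apply, Fin.sum_univ_two]
    exact dvd_add (hb.mul_left _) (ha.mul_right _)
  inv_mem' := by
    intro a ha
    simp only [Set.mem_setOf_eq] at *
    have h : (a⁻¹).1 = adjugate a.1 := Matrix.SpecialLinearGroup.coe_inv a
    rw [h, Matrix.adjugate_fin_two]
    simpa using ha.neg_right

/-- The group `(𝒪₈ ⊗ ℤ₂)¹`: elements of `SL₂(R)` whose upper-right entry is divisible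
by 2 and whose upper-left entry lies in `A₂` (the preimage of the prime field `𝔽₂ ⊆
𝔽₄`, i.e. has idempotent image under `f : R → 𝔽₄`). -/
def sl2UpperDivA (R : Type) [CommRing R] (f : R →+* GaloisField 2 2)
    (hf2 : f 2 = 0) : Subgroup (Matrix.SpecialLinearGroup (Fin 2) R) where
  carrier := {g | (2 : R) ∣ g.1 0 1 ∧ f (g.1 0 0) ^ 2 = f (g.1 0 0)}
  one_mem' := by
    constructor
    · simp only [Matrix.SpecialLinearGroup.coe_one]
      rw [Matrix.one_apply_ne (by decide)]
      exact dvd_zero 2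
    · simp only [Matrix.SpecialLinearGroup.coe_one]
      rw [Matrix.one_apply_eq]
      simp
  mul_mem' := by
    rintro a b ⟨ha1, ha2⟩ ⟨hb1, hb2⟩
    constructor
    · simp only [Matrix.SpecialLinearGroup.coe_mul]
      rw [Matrix.mul_apply, Fin.sum_univ_two]
      exact dvd_add (hb1.mul_left _) (ha1.mul_right _)
    · simp only [Matrix.SpecialLinearGroup.coe_mul]
      rw [Matrix.mul_apply, Fin.sum_univ_two]
      obtain ⟨y, hy⟩ := ha1
      have hzero : f (a.1 0 1 * b.1 1 0) = 0 := by
        rw [hy, _root_.map_mul, _root_.map_mul, hf2, zero_mul, zero_mul]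
      rw [_root_.map_add, hzero, add_zero, _root_.map_mul, mul_pow, ha2, hb2]
  inv_mem' := by
    rintro a ⟨ha1, ha2⟩
    have h : (a⁻¹).1 = adjugate a.1 := Matrix.SpecialLinearGroup.coe_inv a
    constructor
    · rw [h, Matrix.adjugate_fin_two]
      simpa using ha1.neg_right
    · rw [h, Matrix.adjugate_fin_two]
      simp only [Matrix.cons_val', Matrix.cons_val_zero, Matrix.cons_val_one,
        Matrix.head_cons, Matrix.head_fin_const, Matrix.empty_val',
        Matrix.cons_val_fin_one, Matrix.of_apply]
      -- the (0,0)-entry of the inverse is a.1 1 1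
      have hdet : a.1 0 0 * a.1 1 1 - a.1 0 1 * a.1 1 0 = 1 := by
        have := a.2
        rwa [Matrix.det_fin_two] at this
      obtain ⟨y, hy⟩ := ha1
      have h1 : f (a.1 0 0) * f (a.1 1 1) = 1 := by
        have := congrArg f hdet
        rw [_root_.map_sub, _root_.map_mul, _root_.map_mul, _root_.map_one, hy, _root_.map_mul, hf2, zero_mul,
          zero_mul, sub_zero] at this
        exact this
      have h00 : f (a.1 0 0) = 1 := by
        calc f (a.1 0 0) = f (a.1 0 0) ^ 2 * f (a.1 1 1) := by
              rw [sq, mul_assoc, h1, mul_one]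
          _ = f (a.1 0 0) * f (a.1 1 1) := by rw [ha2]
          _ = 1 := h1
      have h11 : f (a.1 1 1) = 1 := by
        rw [h00, one_mul] at h1; exact h1
      rw [h11]; norm_num

/-- Let `p ≡ 5 (mod 8)` (so `O_{F₂}/2O_{F₂} ≅ 𝔽₄`; `R = O_{F₂}`,
`f : R → 𝔽₄` the reduction, `A₂ = ℤ₂[√p]` the preimage of `𝔽₂`).  Then
`(𝒪₈ ⊗ ℤ₂)¹` is a normal subgroup of `(𝒪₄ ⊗ ℤ₂)¹` and the quotient is isomorphic to
`𝔽₄ˣ` via `(a b; c d) ↦ a mod 2` (expressed via a surjective homomorphism to `𝔽₄ˣ`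
with kernel `(𝒪₈ ⊗ ℤ₂)¹`). -/
theorem stmt16
    (p : ℕ) [Fact p.Prime] (hp8 : p % 8 = 5)
    (R : Type) [CommRing R]
    (f : R →+* GaloisField 2 2)
    (hfsurj : Function.Surjective f)
    (hker : RingHom.ker f = Ideal.span {(2 : R)})
    (hf2 : f 2 = 0)
    (s : R) (hs : s ^ 2 = (p : R)) (hsf : f s ^ 2 = f s) :
    ((sl2UpperDivA R f hf2).subgroupOf (sl2UpperDiv R)).Normal ∧
    ∃ θ : (sl2UpperDiv R) →* (GaloisField 2 2)ˣ,
      Function.Surjective θ ∧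
      θ.ker = (sl2UpperDivA R f hf2).subgroupOf (sl2UpperDiv R) ∧
      ∀ g : (sl2UpperDiv R), ((θ g : (GaloisField 2 2)ˣ) : GaloisField 2 2) = f ((g : Matrix.SpecialLinearGroup (Fin 2) R).1 0 0) := by
  classical
  have key : ∀ g : (sl2UpperDiv R),
      f ((g : Matrix.SpecialLinearGroup (Fin 2) R).1 0 0) *
        f ((g : Matrix.SpecialLinearGroup (Fin 2) R).1 1 1) = 1 := by
    intro g
    obtain ⟨y, hy⟩ := g.2
    have hdet : g.1.1 0 0 * g.1.1 1 1 - g.1.1 0 1 * g.1.1 1 0 = 1 := by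
      have := g.1.2
      rwa [Matrix.det_fin_two] at this
    have := congrArg f hdet
    rwa [_root_.map_sub, _root_.map_mul, _root_.map_mul, _root_.map_one, hy,
      _root_.map_mul, hf2, zero_mul, zero_mul, sub_zero] at this
  let θ : (sl2UpperDiv R) →* (GaloisField 2 2)ˣ :=
  { toFun := fun g => ⟨f (g.1.1 0 0), f (g.1.1 1 1), key g, by
      rw [mul_comm]; exact key g⟩
    map_one' := by
      ext
      show f ((1 : Matrix.SpecialLinearGroup (Fin 2) R).1 0 0) = 1
      simp [Matrix.SpecialLinearGroup.coe_one]
    map_mul' := by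
      intro g h
      ext
      show f ((g.1 * h.1).1 0 0) = f (g.1.1 0 0) * f (h.1.1 0 0)
      obtain ⟨y, hy⟩ := g.2
      simp only [Matrix.SpecialLinearGroup.coe_mul]
      rw [Matrix.mul_apply, Fin.sum_univ_two, _root_.map_add, _root_.map_mul,
        _root_.map_mul, hy, _root_.map_mul, hf2, zero_mul, zero_mul, add_zero] }
  have hval : ∀ g : (sl2UpperDiv R),
      ((θ g : (GaloisField 2 2)ˣ) : GaloisField 2 2) = f (g.1.1 0 0) := fun g => rfl
  have hkereq : θ.ker = (sl2UpperDivA R f hf2).subgroupOf (sl2UpperDiv R) := by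
    ext g
    rw [MonoidHom.mem_ker, Subgroup.mem_subgroupOf]
    constructor
    · intro h
      have h00 : f (g.1.1 0 0) = 1 := by
        have := congrArg (fun u : (GaloisField 2 2)ˣ => (u : GaloisField 2 2)) h
        simpa [hval] using this
      exact ⟨g.2, by rw [h00]; norm_num⟩
    · rintro ⟨-, h2⟩
      have h00 : f (g.1.1 0 0) = 1 := by
        calc f (g.1.1 0 0) = f (g.1.1 0 0) ^ 2 * f (g.1.1 1 1) := by
              rw [sq, mul_assoc, key g, mul_one]
          _ = f (g.1.1 0 0) * f (g.1.1 1 1) := by rw [h2]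
          _ = 1 := key g
      ext
      exact h00
  have hsurj : Function.Surjective θ := by
    intro u
    obtain ⟨a, ha⟩ := hfsurj (u : GaloisField 2 2)
    obtain ⟨d, hd⟩ := hfsurj ((u⁻¹ : (GaloisField 2 2)ˣ) : GaloisField 2 2)
    have hmem : a * d - 1 ∈ RingHom.ker f := by
      simp [RingHom.mem_ker, ha, hd]
    rw [hker, Ideal.mem_span_singleton] at hmem
    obtain ⟨t, ht⟩ := hmem
    have hdet : Matrix.det !![a, 2 * t; 1, d] = 1 := by
      rw [Matrix.det_fin_two_of]
      linear_combination ht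
    refine ⟨⟨⟨!![a, 2 * t; 1, d], hdet⟩, ⟨t, rfl⟩⟩, ?_⟩
    ext
    simpa [hval] using ha
  refine ⟨hkereq ▸ θ.normal_ker, θ, hsurj, hkereq, hval⟩
end
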